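/- arXiv:2206.04340 — 6 statements merged into one kernel-verified Lean document; each statement's English description precedes it below -/
import Mathlib

section
/- Let ι = (0 = i₀ < ⋯ < i_N = 1) be a partition of [0,1], W a step graphon on ι with associated N×N matrix W_ι given by [W_ι]_{j₁j₂} = b_{j₁j₂}(i_{j₂} − i_{j₂-1}), and Δ_{W_ι} = diag(W_ι 𝟙) − W_ι its Laplacian. If u₀ ∈ 𝒫_ι, say u₀(x) = 1_ι(x)ᵀ u⃗₀ with u⃗₀ ∈ ℝ^N, then the function u(x,t) = 1_ι(x)ᵀ exp(−Δ_{W_ι} t) u⃗₀ satisfies u(·,t) ∈ 𝒫_ι for all t ≥ 0, u(x,0) = u₀(x), and ∂u/∂t(x,t) = ∫₀¹ W(x,y)(u(y,t) − u(x,t)) dy for all t ≥ 0 and x ∈ (0,1]. -/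
open MeasureTheory Matrix

noncomputable section

/-- The interval `(i_{j-1}, i_j]` of a partition `ι = (i₀, …, i_N)` of `[0,1]`. -/
def Iset {N : ℕ} (i : Fin (N + 1) → ℝ) (j : Fin N) : Set ℝ :=
  Set.Ioc (i j.castSucc) (i j.succ)

/-- The step graphon `W(x,y) = Σ_{j₁,j₂} b_{j₁j₂} 1_{(i_{j₁-1},i_{j₁}]}(x) 1_{(i_{j₂-1},i_{j₂}]}(y)`. -/
def stepGraphon {N : ℕ} (i : Fin (N + 1) → ℝ) (b : Matrix (Fin N) (Fin N) ℝ) :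
    ℝ → ℝ → ℝ := fun x y =>
  ∑ j₁ : Fin N, ∑ j₂ : Fin N,
    b j₁ j₂ * (Iset i j₁).indicator (fun _ => (1 : ℝ)) x *
      (Iset i j₂).indicator (fun _ => (1 : ℝ)) y

/-- The matrix `[W_ι]_{j₁j₂} = b_{j₁j₂}(i_{j₂} − i_{j₂-1})` of a step graphon. -/
def Wmat {N : ℕ} (i : Fin (N + 1) → ℝ) (b : Matrix (Fin N) (Fin N) ℝ) :
    Matrix (Fin N) (Fin N) ℝ :=
  Matrix.of fun j₁ j₂ => b j₁ j₂ * (i j₂.succ - i j₂.castSucc)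

/-- The Laplacian `Δ_A = diag(A𝟙) − A` of a square matrix. -/
def lap {N : ℕ} (A : Matrix (Fin N) (Fin N) ℝ) : Matrix (Fin N) (Fin N) ℝ :=
  Matrix.diagonal (A *ᵥ fun _ => (1 : ℝ)) - A

/-- The vector of indicators `1_ι(x) = (1_{(i_{j-1},i_j]}(x))_{j=1}^N`. -/
def oneι {N : ℕ} (i : Fin (N + 1) → ℝ) (x : ℝ) : Fin N → ℝ :=
  fun j => (Iset i j).indicator (fun _ => (1 : ℝ)) x

/-- `𝒫_ι`: step functions on the partition `ι`. -/
def PsetF {N : ℕ} (i : Fin (N + 1) → ℝ) : Set (ℝ → ℝ) :=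
  {u | ∃ a : Fin N → ℝ,
    u = fun x => ∑ j : Fin N, (Iset i j).indicator (fun _ => a j) x}

attribute [local instance] Matrix.linftyOpNormedRing Matrix.linftyOpNormedAlgebra

namespace Stmt6Aux

variable {N : ℕ}

lemma Iset_unique {i : Fin (N + 1) → ℝ} (hmono : StrictMono i) {x : ℝ} {j j' : Fin N}
    (h : x ∈ Iset i j) (h' : x ∈ Iset i j') : j = j' := by
  by_contra hne
  rcases lt_or_gt_of_ne hne with hlt | hlt
  · have hle : j.succ ≤ j'.castSucc := by
      simp only [Fin.le_def, Fin.val_succ, Fin.coe_castSucc]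
      exact hlt
    exact absurd (h.2.trans_lt ((hmono.monotone hle).trans_lt h'.1)) (lt_irrefl x)
  · have hle : j'.succ ≤ j.castSucc := by
      simp only [Fin.le_def, Fin.val_succ, Fin.coe_castSucc]
      exact hlt
    exact absurd (h'.2.trans_lt ((hmono.monotone hle).trans_lt h.1)) (lt_irrefl x)

lemma exists_Iset {i : Fin (N + 1) → ℝ} (hmono : StrictMono i)
    (h0 : i 0 = 0) (h1 : i (Fin.last N) = 1) {x : ℝ} (hx : x ∈ Set.Ioc (0 : ℝ) 1) :
    ∃ j : Fin N, x ∈ Iset i j := by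
  classical
  have h0S : (0 : Fin (N + 1)) ∈ Finset.univ.filter (fun k => i k < x) := by
    simp [h0, hx.1]
  have hne : (Finset.univ.filter (fun k => i k < x)).Nonempty := ⟨0, h0S⟩
  obtain ⟨k, hkmem, hkmax⟩ := Finset.exists_max_image _ (fun k : Fin (N+1) => (k : ℕ)) hne
  have hkx : i k < x := by simpa using hkmem
  have hklast : k ≠ Fin.last N := by
    intro h
    rw [h, h1] at hkx
    exact absurd hx.2 (not_le.mpr hkx)
  have hklt : (k : ℕ) < N := by
    have := Fin.le_last k
    rcases lt_or_eq_of_le this with h | h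
    · exact h
    · exact absurd h hklast
  have hcast : (⟨(k : ℕ), hklt⟩ : Fin N).castSucc = k := by
    apply Fin.ext; simp
  refine ⟨⟨(k : ℕ), hklt⟩, by rw [hcast]; exact hkx, ?_⟩
  by_contra hlt
  push_neg at hlt
  have hmem : (⟨(k : ℕ), hklt⟩ : Fin N).succ ∈ Finset.univ.filter (fun k => i k < x) := by
    simpa using hlt
  have h2 := hkmax _ hmem
  simp [Fin.val_succ] at h2

lemma oneι_eq_single {i : Fin (N + 1) → ℝ} (hmono : StrictMono i) {x : ℝ} {j : Fin N}
    (hj : x ∈ Iset i j) : oneι i x = Pi.single j 1 := by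
  funext k
  by_cases hk : k = j
  · subst hk; simp [oneι, Set.indicator_of_mem hj]
  · have hnot : x ∉ Iset i k := fun h => hk (Iset_unique hmono h hj)
    simp [oneι, Set.indicator_of_notMem hnot, Pi.single_apply, hk]

lemma single_dot (v : Fin N → ℝ) (j : Fin N) : (Pi.single j 1 : Fin N → ℝ) ⬝ᵥ v = v j := by
  simp [dotProduct, Pi.single_apply]

/-- The continuous linear map `M ↦ w ⬝ᵥ (M *ᵥ v)`. -/
def dotMulVecL (w v : Fin N → ℝ) : Matrix (Fin N) (Fin N) ℝ →L[ℝ] ℝ :=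
  LinearMap.toContinuousLinearMap
  { toFun := fun M => w ⬝ᵥ (M *ᵥ v)
    map_add' := fun M M' => by
      show w ⬝ᵥ ((M + M') *ᵥ v) = w ⬝ᵥ (M *ᵥ v) + w ⬝ᵥ (M' *ᵥ v)
      rw [Matrix.add_mulVec, dotProduct_add]
    map_smul' := fun c M => by
      show w ⬝ᵥ ((c • M) *ᵥ v) = c • (w ⬝ᵥ (M *ᵥ v))
      rw [Matrix.smul_mulVec, dotProduct_smul] }

lemma dotMulVecL_apply (w v : Fin N → ℝ) (M : Matrix (Fin N) (Fin N) ℝ) :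
    dotMulVecL w v M = w ⬝ᵥ (M *ᵥ v) := rfl

lemma hasDerivAt_expNeg (L : Matrix (Fin N) (Fin N) ℝ) (t : ℝ) :
    HasDerivAt (fun s : ℝ => NormedSpace.exp ((-s) • L))
      (-(L * NormedSpace.exp ((-t) • L))) t := by
  have h := HasDerivAt.scomp (x := t)
    (_root_.hasDerivAt_exp_smul_const' (𝕂 := ℝ) L (-t)) (hasDerivAt_neg t)
  simp only [Function.comp_def, neg_smul, smul_neg, neg_neg, one_smul] at h ⊢
  exact h

lemma stepGraphon_eq (i : Fin (N + 1) → ℝ) (b : Matrix (Fin N) (Fin N) ℝ) (x y : ℝ) :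
    stepGraphon i b x y = oneι i x ⬝ᵥ (b *ᵥ oneι i y) := by
  simp only [stepGraphon, dotProduct, Matrix.mulVec, oneι, Finset.mul_sum]
  exact Finset.sum_congr rfl fun j₁ _ => Finset.sum_congr rfl fun j₂ _ => by ring

end Stmt6Aux

open Stmt6Aux

theorem stmt6 (N : ℕ) (hN : 0 < N) (i : Fin (N + 1) → ℝ) (hmono : StrictMono i)
    (h0 : i 0 = 0) (h1 : i (Fin.last N) = 1) (b : Matrix (Fin N) (Fin N) ℝ)
    (u0 : Fin N → ℝ) (u₀ : ℝ → ℝ) (hu₀ : u₀ = fun x => oneι i x ⬝ᵥ u0)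
    (u : ℝ → ℝ → ℝ)
    (hu : u = fun x t => oneι i x ⬝ᵥ (NormedSpace.exp ((-t) • lap (Wmat i b)) *ᵥ u0)) :
    (∀ t : ℝ, 0 ≤ t → (fun x => u x t) ∈ PsetF i) ∧
    (∀ x, u x 0 = u₀ x) ∧
    (∀ t : ℝ, 0 ≤ t → ∀ x ∈ Set.Ioc (0 : ℝ) 1,
      HasDerivAt (fun s => u x s)
        (∫ y in Set.Ioc (0 : ℝ) 1, stepGraphon i b x y * (u y t - u x t)) t) := by
  subst hu hu₀
  set L : Matrix (Fin N) (Fin N) ℝ := lap (Wmat i b) with hL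
  refine ⟨?_, ?_, ?_⟩
  · -- membership in PsetF
    intro t _
    refine ⟨NormedSpace.exp ((-t) • L) *ᵥ u0, ?_⟩
    funext x
    simp only [dotProduct, oneι]
    refine Finset.sum_congr rfl fun j _ => ?_
    by_cases h : x ∈ Iset i j <;> simp [h]
  · -- initial condition
    intro x
    simp [NormedSpace.exp_zero, Matrix.one_mulVec]
  · -- derivative
    intro t _ x hx
    obtain ⟨j, hj⟩ := exists_Iset hmono h0 h1 hx
    have hone : oneι i x = Pi.single j 1 := oneι_eq_single hmono hj
    show HasDerivAt (fun s => oneι i x ⬝ᵥ (NormedSpace.exp ((-s) • L) *ᵥ u0))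
      (∫ y in Set.Ioc (0 : ℝ) 1, stepGraphon i b x y *
        ((oneι i y ⬝ᵥ (NormedSpace.exp ((-t) • L) *ᵥ u0)) -
         (oneι i x ⬝ᵥ (NormedSpace.exp ((-t) • L) *ᵥ u0)))) t
    set M : Matrix (Fin N) (Fin N) ℝ := NormedSpace.exp ((-t) • L) with hM
    set v : Fin N → ℝ := M *ᵥ u0 with hv
    -- the derivative
    have hder : HasDerivAt (fun s => oneι i x ⬝ᵥ (NormedSpace.exp ((-s) • L) *ᵥ u0))
        (dotMulVecL (oneι i x) u0 (-(L * M))) t := by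
      have h := (dotMulVecL (oneι i x) u0).hasFDerivAt.comp_hasDerivAt t
        (hasDerivAt_expNeg L t)
      exact h
    -- value of the derivative
    have hval : dotMulVecL (oneι i x) u0 (-(L * M)) =
        ∑ k : Fin N, b j k * (i k.succ - i k.castSucc) * (v k - v j) := by
      rw [dotMulVecL_apply, hone, single_dot]
      have h2 : (-(L * M)) *ᵥ u0 = -(L *ᵥ v) := by
        rw [Matrix.neg_mulVec, ← Matrix.mulVec_mulVec, ← hv]
      rw [h2, Pi.neg_apply, hL]
      simp only [lap, Matrix.sub_mulVec, Pi.sub_apply, Matrix.mulVec_diagonal]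
      rw [neg_sub]
      simp only [Matrix.mulVec, dotProduct, Wmat, Matrix.of_apply, mul_one]
      rw [Finset.sum_mul, ← Finset.sum_sub_distrib]
      exact Finset.sum_congr rfl fun k _ => by ring
    -- pointwise identity for the integrand
    have hxval : oneι i x ⬝ᵥ v = v j := by rw [hone, single_dot]
    have hkey : ∀ y : ℝ, stepGraphon i b x y * ((oneι i y ⬝ᵥ v) - (oneι i x ⬝ᵥ v)) =
        ∑ k : Fin N, (Iset i k).indicator (fun _ => b j k * (v k - v j)) y := by
      intro y
      rw [hxval, stepGraphon_eq, hone, single_dot]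
      have hmv : (b *ᵥ oneι i y) j = ∑ k : Fin N, b j k * oneι i y k := rfl
      rw [hmv]
      by_cases hy : ∃ k : Fin N, y ∈ Iset i k
      · obtain ⟨k₀, hk₀⟩ := hy
        have honey : oneι i y = Pi.single k₀ 1 := oneι_eq_single hmono hk₀
        have h2 : ∀ k : Fin N, (Iset i k).indicator (fun _ => b j k * (v k - v j)) y
            = (b j k * (v k - v j)) * (Pi.single k₀ 1 : Fin N → ℝ) k := by
          intro k
          by_cases hk : k = k₀
          · subst hk; simp [Set.indicator_of_mem hk₀]
          · have hnt : y ∉ Iset i k := fun h => hk (Iset_unique hmono h hk₀)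
            simp [Set.indicator_of_notMem hnt, Pi.single_apply, hk]
        rw [Finset.sum_congr rfl fun k _ => h2 k, honey]
        have honeyk : oneι i y ⬝ᵥ v = v k₀ := by rw [honey, single_dot]
        rw [honey] at honeyk
        rw [honeyk]
        simp [Pi.single_apply, mul_ite, ite_mul, mul_zero, zero_mul, mul_one]
      · push_neg at hy
        have hz : oneι i y = 0 := funext fun k => by
          simp [oneι, Set.indicator_of_notMem (hy k)]
        have h3 : ∀ k : Fin N, (Iset i k).indicator (fun _ => b j k * (v k - v j)) y = 0 :=
          fun k => Set.indicator_of_notMem (hy k) _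
        rw [hz, Finset.sum_congr rfl fun k _ => h3 k]
        simp
    -- value of the integral
    have hint : (∫ y in Set.Ioc (0 : ℝ) 1, stepGraphon i b x y *
        ((oneι i y ⬝ᵥ v) - (oneι i x ⬝ᵥ v))) =
        ∑ k : Fin N, b j k * (i k.succ - i k.castSucc) * (v k - v j) := by
      rw [MeasureTheory.integral_congr_ae (Filter.Eventually.of_forall fun y => hkey y)]
      rw [MeasureTheory.integral_finset_sum]
      · refine Finset.sum_congr rfl fun k _ => ?_
        have hsub : Iset i k ⊆ Set.Ioc (0 : ℝ) 1 := by
          intro z hz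
          refine ⟨lt_of_le_of_lt ?_ hz.1, hz.2.trans ?_⟩
          · rw [← h0]; exact hmono.monotone (Fin.zero_le _)
          · rw [← h1]; exact hmono.monotone (Fin.le_last _)
        rw [MeasureTheory.setIntegral_indicator
            (show MeasurableSet (Iset i k) from measurableSet_Ioc),
          Set.inter_eq_self_of_subset_right hsub, MeasureTheory.setIntegral_const]
        simp only [Iset]
        rw [measureReal_def, Real.volume_Ioc, ENNReal.toReal_ofReal
            (sub_nonneg.mpr (hmono (Fin.castSucc_lt_succ (i := k))).le)]
        simp only [smul_eq_mul]
        ring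
      · intro k _
        refine (MeasureTheory.integrable_indicator_iff measurableSet_Ioc).mpr ?_
        refine (MeasureTheory.integrableOn_const_iff).mpr (Or.inr ?_)
        exact lt_of_le_of_lt (MeasureTheory.Measure.restrict_apply_le _ _)
          (by rw [Real.volume_Ioc]; exact ENNReal.ofReal_lt_top)
    rw [hint, ← hval]
    exact hder
end
end

section
/- Let ι = (0 = i₀ < ⋯ < i_N = 1) be a partition of [0,1], W a step graphon on ι with matrix W_ι, and fix j ∈ {1, …, N}. If u₀ ∈ L²₀((i_{j-1}, i_j]) (i.e., u₀ vanishes outside (i_{j-1}, i_j] and ∫ u₀ = 0), then the function u(x,t) = u₀(x) exp(−μ t), where μ = (W_ι 𝟙)_j = Σ_{j₂=1}^N b_{j j₂}(i_{j₂} − i_{j₂-1}), satisfies u(·,t) ∈ L²₀((i_{j-1}, i_j]) for all t ≥ 0, u(x,0) = u₀(x), and ∂u/∂t(x,t) = ∫₀¹ W(x,y)(u(y,t) − u(x,t)) dy for almost every x ∈ [0,1] and all t ≥ 0. -/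
open MeasureTheory

noncomputable section

/-- The Lebesgue measure on the unit interval `(0,1]`, modelling `[0,1]`. -/
def μ01 : Measure ℝ := volume.restrict (Set.Ioc 0 1)

/-- `L²₀(I)`: functions `u ∈ L²([0,1])` with `u = u·1_I` and `∫_I u = 0`. -/
def L20F (I : Set ℝ) : Set (ℝ → ℝ) :=
  {u | MemLp u 2 μ01 ∧ (∀ x, x ∉ I → u x = 0) ∧ ∫ x in I, u x = 0}

/-- If `u₀ ∈ L²₀((i_{j-1}, i_j])`, then `u(x,t) = u₀(x) exp(−μt)` with
`μ = (W_ι 𝟙)_j = Σ_{j₂} b_{j j₂}(i_{j₂} − i_{j₂-1})` satisfies `u(·,t) ∈ L²₀((i_{j-1}, i_j])`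
for all `t ≥ 0`, `u(x,0) = u₀(x)`, and the graphon evolution equation for a.e. `x ∈ [0,1]`
and all `t ≥ 0`. -/
theorem stmt7 (N : ℕ) (hN : 0 < N) (i : Fin (N + 1) → ℝ) (hmono : StrictMono i)
    (h0 : i 0 = 0) (h1 : i (Fin.last N) = 1) (b : Matrix (Fin N) (Fin N) ℝ)
    (j : Fin N) (u₀ : ℝ → ℝ) (hu₀ : u₀ ∈ L20F (Iset i j))
    (μ : ℝ) (hμ : μ = ∑ j₂ : Fin N, b j j₂ * (i j₂.succ - i j₂.castSucc))
    (u : ℝ → ℝ → ℝ) (hu : u = fun x t => u₀ x * Real.exp (-μ * t)) :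
    (∀ t : ℝ, 0 ≤ t → (fun x => u x t) ∈ L20F (Iset i j)) ∧
    (∀ x, u x 0 = u₀ x) ∧
    (∀ᵐ x ∂μ01, ∀ t : ℝ, 0 ≤ t →
      HasDerivAt (fun s => u x s)
        (∫ y in Set.Ioc (0 : ℝ) 1, stepGraphon i b x y * (u y t - u x t)) t) := by
  obtain ⟨hmem, hout, hint⟩ := hu₀
  subst hu
  haveI hfin : IsFiniteMeasure μ01 := by
    constructor
    rw [μ01, Measure.restrict_apply_univ, Real.volume_Ioc]
    norm_num
  have hsub : ∀ k : Fin N, Iset i k ⊆ Set.Ioc 0 1 := by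
    intro k
    apply Set.Ioc_subset_Ioc
    · rw [← h0]; exact hmono.monotone (Fin.zero_le _)
    · rw [← h1]; exact hmono.monotone (Fin.le_last _)
  have hdisj : ∀ k l : Fin N, k ≠ l → ∀ y ∈ Iset i k, y ∉ Iset i l := by
    intro k l hkl y hy hyl
    rcases lt_or_gt_of_ne hkl with h | h
    · have hle : i k.succ ≤ i l.castSucc := by
        apply hmono.monotone
        have hv := Fin.lt_def.mp h
        rw [Fin.le_def, Fin.val_succ, Fin.coe_castSucc]
        omega
      exact absurd hyl.1 (not_lt.2 (hy.2.trans hle))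
    · have hle : i l.succ ≤ i k.castSucc := by
        apply hmono.monotone
        have hv := Fin.lt_def.mp h
        rw [Fin.le_def, Fin.val_succ, Fin.coe_castSucc]
        omega
      exact absurd hy.1 (not_lt.2 (hyl.2.trans hle))
  have hmeas : ∀ k : Fin N, MeasurableSet (Iset i k) := fun k => measurableSet_Ioc
  have hzero : ∀ k : Fin N, ∫ y in Iset i k, u₀ y = 0 := by
    intro k
    by_cases hk : k = j
    · rw [hk]; exact hint
    · rw [setIntegral_congr_fun (hmeas k) (g := fun _ => (0:ℝ))
        (fun y hy => hout y (hdisj k j hk y hy))]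
      simp
  have huint : Integrable u₀ μ01 := hmem.integrable (by norm_num)
  -- key integral computation
  have key : ∀ x t : ℝ,
      (∫ y in Set.Ioc (0 : ℝ) 1,
          stepGraphon i b x y * (u₀ y * Real.exp (-μ * t) - u₀ x * Real.exp (-μ * t)))
        = u₀ x * (Real.exp (-μ * t) * -μ) := by
    intro x t
    set E := Real.exp (-μ * t) with hE
    set c : ℝ := u₀ x * E with hc
    have hvint : Integrable (fun y => u₀ y * E) μ01 := huint.mul_const E
    have hgint : Integrable (fun y => u₀ y * E - c) μ01 :=
      hvint.sub (integrable_const _)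
    have hintegrand : ∀ y, stepGraphon i b x y * (u₀ y * E - u₀ x * E)
        = ∑ p : Fin N × Fin N,
            (b p.1 p.2 * (Iset i p.1).indicator (fun _ => (1:ℝ)) x) *
              ((Iset i p.2).indicator (fun z => u₀ z * E - c) y) := by
      intro y
      rw [stepGraphon, Fintype.sum_prod_type, Finset.sum_mul]
      refine Finset.sum_congr rfl fun j₁ _ => ?_
      rw [Finset.sum_mul]
      refine Finset.sum_congr rfl fun j₂ _ => ?_
      by_cases hy : y ∈ Iset i j₂
      · rw [Set.indicator_of_mem hy, Set.indicator_of_mem hy, hc]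
        ring
      · rw [Set.indicator_of_notMem hy, Set.indicator_of_notMem hy]
        ring
    have hterm : ∀ p : Fin N × Fin N, Integrable (fun y =>
        (b p.1 p.2 * (Iset i p.1).indicator (fun _ => (1:ℝ)) x) *
          ((Iset i p.2).indicator (fun z => u₀ z * E - c) y)) μ01 :=
      fun p => (hgint.indicator (hmeas p.2)).const_mul _
    have hrestrict : ∀ k : Fin N, μ01.restrict (Iset i k) = volume.restrict (Iset i k) := by
      intro k
      rw [μ01, Measure.restrict_restrict (hmeas k),
        Set.inter_eq_self_of_subset_left (hsub k)]
    have hlen : ∀ k : Fin N, (volume (Iset i k)).toReal = i k.succ - i k.castSucc := by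
      intro k
      rw [Iset, Real.volume_Ioc, ENNReal.toReal_ofReal]
      have := hmono (show k.castSucc < k.succ from Fin.castSucc_lt_succ)
      linarith
    have hset : ∀ k : Fin N,
        ∫ y, (Iset i k).indicator (fun z => u₀ z * E - c) y ∂μ01
          = -((i k.succ - i k.castSucc) * c) := by
      intro k
      rw [integral_indicator (hmeas k), hrestrict k]
      have hi1 : IntegrableOn (fun y => u₀ y * E) (Iset i k) volume := by
        have := hvint.restrict (s := Iset i k)
        rwa [hrestrict k] at this
      rw [integral_sub hi1 (integrableOn_const (by
        rw [Iset, Real.volume_Ioc]; exact ENNReal.ofReal_ne_top))]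
      rw [integral_mul_const, hzero k, setIntegral_const, measureReal_def, hlen k]
      simp
    calc (∫ y in Set.Ioc (0 : ℝ) 1, stepGraphon i b x y * (u₀ y * E - u₀ x * E))
        = ∫ y, (∑ p : Fin N × Fin N,
            (b p.1 p.2 * (Iset i p.1).indicator (fun _ => (1:ℝ)) x) *
              ((Iset i p.2).indicator (fun z => u₀ z * E - c) y)) ∂μ01 := by
          rw [μ01]; exact integral_congr_ae (Filter.Eventually.of_forall hintegrand)
      _ = ∑ p : Fin N × Fin N,
            ∫ y, (b p.1 p.2 * (Iset i p.1).indicator (fun _ => (1:ℝ)) x) *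
              ((Iset i p.2).indicator (fun z => u₀ z * E - c) y) ∂μ01 :=
          integral_finset_sum _ (fun p _ => hterm p)
      _ = ∑ p : Fin N × Fin N,
            (b p.1 p.2 * (Iset i p.1).indicator (fun _ => (1:ℝ)) x) *
              (-((i p.2.succ - i p.2.castSucc) * c)) := by
          refine Finset.sum_congr rfl fun p _ => ?_
          rw [integral_const_mul, hset p.2]
      _ = u₀ x * (E * -μ) := by
          by_cases hx : u₀ x = 0
          · have hc0 : c = 0 := by rw [hc, hx, zero_mul]
            simp [hc0, hx]
          · have hxmem : x ∈ Iset i j := by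
              by_contra hcon; exact hx (hout x hcon)
            rw [Fintype.sum_prod_type]
            rw [Finset.sum_eq_single j]
            · have hjk : ∀ k : Fin N,
                  b ((j : Fin N), k).1 ((j : Fin N), k).2 *
                    (Iset i ((j : Fin N), k).1).indicator (fun _ => (1:ℝ)) x *
                    -((i ((j : Fin N), k).2.succ - i ((j : Fin N), k).2.castSucc) * c)
                  = u₀ x * (E * -(b j k * (i k.succ - i k.castSucc))) := by
                intro k
                show b j k * (Iset i j).indicator (fun _ => (1:ℝ)) x *
                    -((i k.succ - i k.castSucc) * c) = _
                rw [Set.indicator_of_mem hxmem, hc]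
                ring
              rw [Finset.sum_congr rfl fun k _ => hjk k, ← Finset.mul_sum,
                ← Finset.mul_sum, Finset.sum_neg_distrib, hμ]
            · intro k _ hk
              have hnm : x ∉ Iset i k := hdisj j k (Ne.symm hk) x hxmem
              refine Finset.sum_eq_zero fun l _ => ?_
              show b k l * (Iset i k).indicator (fun _ => (1:ℝ)) x *
                  -((i l.succ - i l.castSucc) * c) = 0
              rw [Set.indicator_of_notMem hnm]
              ring
            · intro h; exact absurd (Finset.mem_univ j) h
  refine ⟨?_, ?_, ?_⟩
  · intro t ht
    refine ⟨?_, ?_, ?_⟩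
    · exact MemLp.ae_eq (Filter.Eventually.of_forall fun x => mul_comm _ _)
        (hmem.const_mul (Real.exp (-μ * t)))
    · intro x hx
      show u₀ x * Real.exp (-μ * t) = 0
      rw [hout x hx, zero_mul]
    · show (∫ x in Iset i j, u₀ x * Real.exp (-μ * t)) = 0
      rw [integral_mul_const, hint, zero_mul]
  · intro x
    show u₀ x * Real.exp (-μ * 0) = u₀ x
    rw [mul_zero, Real.exp_zero, mul_one]
  · refine Filter.Eventually.of_forall fun x t ht => ?_
    have hkey := key x t
    show HasDerivAt (fun s => u₀ x * Real.exp (-μ * s)) _ t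
    rw [hkey]
    have h1 : HasDerivAt (fun s : ℝ => -μ * s) (-μ) t := by
      simpa using (hasDerivAt_id t).const_mul (-μ)
    exact h1.exp.const_mul (u₀ x)
end
end

section
/- Let a₁₂, a₂₃ ≥ 0 with a₁₂ + a₂₃ > 0, let a₁₃ ∈ ℝ, and set Δ = √((a₁₂−a₁₃)² + (a₁₂−a₂₃)² + (a₁₃−a₂₃)²)/√2 and λ₃ = a₁₂ + a₁₃ + a₂₃ − Δ. Then: λ₃ > 0 if and only if a₁₃ > −a₁₂a₂₃/(a₁₂+a₂₃); λ₃ = 0 if and only if a₁₃ = −a₁₂a₂₃/(a₁₂+a₂₃); and λ₃ < 0 if and only if a₁₃ < −a₁₂a₂₃/(a₁₂+a₂₃). -/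
noncomputable section

/-- If `a₁₂, a₂₃ ≥ 0`, `a₁₂ + a₂₃ > 0`, and
`Δ = √((a₁₂−a₁₃)² + (a₁₂−a₂₃)² + (a₁₃−a₂₃)²)/√2`, then the eigenvalue
`λ₃ = a₁₂+a₁₃+a₂₃−Δ` is positive iff `a₁₃ > −a₁₂a₂₃/(a₁₂+a₂₃)`, zero iff
`a₁₃ = −a₁₂a₂₃/(a₁₂+a₂₃)`, and negative iff `a₁₃ < −a₁₂a₂₃/(a₁₂+a₂₃)`. -/
theorem stmt13 (a12 a13 a23 : ℝ) (h12 : 0 ≤ a12) (h23 : 0 ≤ a23)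
    (hpos : 0 < a12 + a23)
    (Δ : ℝ)
    (hΔ : Δ = Real.sqrt ((a12 - a13) ^ 2 + (a12 - a23) ^ 2 + (a13 - a23) ^ 2) /
      Real.sqrt 2) :
    (0 < a12 + a13 + a23 - Δ ↔ -(a12 * a23) / (a12 + a23) < a13) ∧
    (a12 + a13 + a23 - Δ = 0 ↔ a13 = -(a12 * a23) / (a12 + a23)) ∧
    (a12 + a13 + a23 - Δ < 0 ↔ a13 < -(a12 * a23) / (a12 + a23)) := by
  set S := a12 + a13 + a23 with hS
  set t := -(a12 * a23) / (a12 + a23) with ht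
  have hXnn : (0:ℝ) ≤ (a12 - a13) ^ 2 + (a12 - a23) ^ 2 + (a13 - a23) ^ 2 := by positivity
  have hΔnn : 0 ≤ Δ := by rw [hΔ]; positivity
  have hΔ2 : Δ ^ 2 = a12^2 + a13^2 + a23^2 - a12*a13 - a12*a23 - a13*a23 := by
    rw [hΔ, div_pow, Real.sq_sqrt hXnn, Real.sq_sqrt (by norm_num : (0:ℝ) ≤ 2)]
    ring
  have hkey : S ^ 2 - Δ ^ 2 = 3 * (a13 * (a12 + a23) + a12 * a23) := by
    rw [hΔ2, hS]; ring
  -- t * (a12+a23) = -(a12*a23)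
  have htP : t * (a12 + a23) = -(a12 * a23) := by
    rw [ht, div_mul_cancel₀ _ hpos.ne']
  -- If a13 ≥ t then S > 0
  have hSpos : ∀ h : t ≤ a13, 0 < S := by
    intro h
    have h1 : t * (a12 + a23) ≤ a13 * (a12 + a23) := by
      exact mul_le_mul_of_nonneg_right h hpos.le
    rw [htP] at h1
    nlinarith [sq_nonneg (a12 - a23), sq_nonneg (a12 + a23)]
  have hgt : t < a13 → 0 < S - Δ := by
    intro h
    have h1 : t * (a12 + a23) < a13 * (a12 + a23) := mul_lt_mul_of_pos_right h hpos
    rw [htP] at h1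
    have hsq : Δ ^ 2 < S ^ 2 := by nlinarith
    have hS0 := hSpos h.le
    nlinarith
  have heq : a13 = t → S - Δ = 0 := by
    intro h
    have h1 : a13 * (a12 + a23) = -(a12 * a23) := by rw [h, htP]
    have hsq : Δ ^ 2 = S ^ 2 := by nlinarith
    have hS0 := hSpos h.ge
    nlinarith [sq_nonneg (S - Δ)]
  have hlt : a13 < t → S - Δ < 0 := by
    intro h
    have h1 : a13 * (a12 + a23) < t * (a12 + a23) := mul_lt_mul_of_pos_right h hpos
    rw [htP] at h1
    have hsq : S ^ 2 < Δ ^ 2 := by nlinarith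
    by_contra hc
    push_neg at hc
    have : 0 ≤ S - Δ := by linarith
    nlinarith
  refine ⟨⟨fun h => ?_, hgt⟩, ⟨fun h => ?_, fun h => by linarith [heq h]⟩,
    ⟨fun h => ?_, hlt⟩⟩
  · rcases lt_trichotomy t a13 with h' | h' | h'
    · exact h'
    · exact absurd h (by simp [heq h'.symm])
    · exact absurd h (by linarith [hlt h'])
  · rcases lt_trichotomy t a13 with h' | h' | h'
    · exact absurd h (by linarith [hgt h'])
    · exact h'.symm
    · exact absurd h (by linarith [hlt h'])
  · rcases lt_trichotomy t a13 with h' | h' | h'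
    · exact absurd h (by linarith [hgt h'])
    · exact absurd h (by simp [heq h'.symm])
    · exact h'
end
end

section
/- Let a₁₂, a₂₃ ≥ 0 with a₁₂ + a₂₃ > 0 and a₁₃ > −a₁₂a₂₃/(a₁₂+a₂₃), let Δ_W be the 3×3 Laplacian with rows (a₁₂+a₁₃, −a₁₂, −a₁₃), (−a₁₂, a₂₃+a₁₂, −a₂₃), (−a₁₃, −a₂₃, a₁₃+a₂₃), and let u⃗(t) = exp(−Δ_W t) u⃗₀ for u⃗₀ ∈ ℝ³. Then as t → ∞, u⃗(t) converges to b(0)·𝟙, where b(0) = (1/3) 𝟙ᵀ u⃗₀; i.e., the barycenters of all three groups collapse to the common barycenter of the initial condition. -/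
open Matrix Filter

noncomputable section

lemma aux_tendsto {n : Type*} [Fintype n] [DecidableEq n]
    (A : Matrix n n ℝ) (hpsd : A.PosSemidef)
    (y w : n → ℝ) (hy : A *ᵥ y = 0) (hw : ∀ x : n → ℝ, A *ᵥ x = 0 → x ⬝ᵥ w = 0) :
    Tendsto (fun t : ℝ => NormedSpace.exp ((-t) • A) *ᵥ (y + w)) atTop (nhds y) := by
  classical
  have hH : A.IsHermitian := hpsd.1
  have htr : Aᵀ = A := by
    ext i j
    conv_rhs => rw [← hH]
    simp [Matrix.conjTranspose_apply]
  set U : Matrix n n ℝ := (hH.eigenvectorUnitary : Matrix n n ℝ) with hUdef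
  have hUa : ∀ i j, U i j = hH.eigenvectorBasis j i := fun i j =>
    hH.eigenvectorUnitary_apply i j
  have hcol : ∀ i, A *ᵥ (fun j => U j i) = fun j => hH.eigenvalues i * U j i := by
    intro i
    have h2 : (fun j => U j i) = ⇑(hH.eigenvectorBasis i) := by
      funext j; rw [hUa j i]
    rw [h2, hH.mulVec_eigenvectorBasis i]
    funext j
    rw [Pi.smul_apply, smul_eq_mul, hUa j i]
  have hswap : ∀ x z : n → ℝ, x ⬝ᵥ (A *ᵥ z) = (A *ᵥ x) ⬝ᵥ z := by
    intro x z
    rw [dotProduct_mulVec, ← Matrix.mulVec_transpose, htr]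
  have hyc : ∀ i, hH.eigenvalues i ≠ 0 → (fun j => U j i) ⬝ᵥ y = 0 := by
    intro i hi
    have h2 : (A *ᵥ fun j => U j i) ⬝ᵥ y = hH.eigenvalues i * ((fun j => U j i) ⬝ᵥ y) := by
      rw [hcol]; simp [dotProduct, Finset.mul_sum, mul_assoc]
    have h1 : hH.eigenvalues i * ((fun j => U j i) ⬝ᵥ y) = 0 := by
      rw [← h2, ← hswap, hy, dotProduct_zero]
    exact (mul_eq_zero.mp h1).resolve_left hi
  have hwc : ∀ i, hH.eigenvalues i = 0 → (fun j => U j i) ⬝ᵥ w = 0 := by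
    intro i hi
    apply hw
    rw [hcol]; ext j; simp [hi]
  have hU1 : U * star U = 1 := Unitary.coe_mul_star_self hH.eigenvectorUnitary
  have hU2 : star U * U = 1 := Unitary.coe_star_mul_self hH.eigenvectorUnitary
  have hUinv : U⁻¹ = star U := Matrix.inv_eq_left_inv hU2
  have hUnit : IsUnit U := ⟨Unitary.toUnits hH.eigenvectorUnitary, rfl⟩
  have key : ∀ t : ℝ, NormedSpace.exp ((-t) • A)
      = U * Matrix.diagonal (fun i => Real.exp (-t * hH.eigenvalues i)) * star U := by
    intro t
    have hd : (-t) • A = U * Matrix.diagonal (fun i => -t * hH.eigenvalues i) * star U := by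
      conv_lhs => rw [hH.spectral_theorem, Unitary.conjStarAlgAut_apply]
      rw [← Matrix.smul_mul, ← Matrix.mul_smul]
      congr 2
      ext i j
      by_cases h : i = j <;> simp [Matrix.diagonal_apply, h]
    rw [hd, ← hUinv, Matrix.exp_conj U _ hUnit, hUinv, Matrix.exp_diagonal]
    congr 2
    rw [Pi.exp_def]
    funext i
    rw [← Real.exp_eq_exp_ℝ]
  have hSdot : ∀ (x : n → ℝ) i, (star U *ᵥ x) i = (fun j => U j i) ⬝ᵥ x := by
    intro x i
    simp [Matrix.mulVec, dotProduct, Matrix.star_apply]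
  have part1 : ∀ t : ℝ, NormedSpace.exp ((-t) • A) *ᵥ y = y := by
    intro t
    rw [key t, Matrix.mul_assoc, ← Matrix.mulVec_mulVec, ← Matrix.mulVec_mulVec]
    have hDy : Matrix.diagonal (fun i => Real.exp (-t * hH.eigenvalues i)) *ᵥ (star U *ᵥ y)
        = star U *ᵥ y := by
      ext i
      rw [Matrix.mulVec_diagonal]
      rcases eq_or_ne (hH.eigenvalues i) 0 with h0 | h0
      · simp [h0]
      · rw [hSdot y i, hyc i h0, mul_zero]
    rw [hDy, Matrix.mulVec_mulVec, hU1, Matrix.one_mulVec]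
  have part2 : Tendsto (fun t : ℝ => NormedSpace.exp ((-t) • A) *ᵥ w) atTop (nhds 0) := by
    have hrw : ∀ t : ℝ, NormedSpace.exp ((-t) • A) *ᵥ w
        = fun j => ∑ i, U j i * (Real.exp (-t * hH.eigenvalues i) * ((star U *ᵥ w) i)) := by
      intro t
      rw [key t, Matrix.mul_assoc, ← Matrix.mulVec_mulVec, ← Matrix.mulVec_mulVec]
      have hdv : (Matrix.diagonal (fun i => Real.exp (-t * hH.eigenvalues i))) *ᵥ (star U *ᵥ w)
          = fun i => Real.exp (-t * hH.eigenvalues i) * ((star U *ᵥ w) i) :=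
        funext fun i => Matrix.mulVec_diagonal _ _ _
      rw [hdv]
      funext j
      simp [Matrix.mulVec, dotProduct]
    apply tendsto_pi_nhds.mpr
    intro j
    simp only [hrw]
    have h0 : Tendsto
        (fun t : ℝ => ∑ i, U j i * (Real.exp (-t * hH.eigenvalues i) * ((star U *ᵥ w) i)))
        atTop (nhds (∑ _i : n, (0 : ℝ))) := by
      apply tendsto_finset_sum
      intro i _
      rcases eq_or_ne (hH.eigenvalues i) 0 with hz | hz
      · have hwz : (star U *ᵥ w) i = 0 := by rw [hSdot w i, hwc i hz]
        simp [hwz]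
      · have hpos' : 0 < hH.eigenvalues i :=
          lt_of_le_of_ne (hpsd.eigenvalues_nonneg i) (Ne.symm hz)
      
        have hexp : Tendsto (fun t : ℝ => Real.exp (-t * hH.eigenvalues i)) atTop (nhds 0) := by
          apply Real.tendsto_exp_atBot.comp
          have h1 : Tendsto (fun t : ℝ => t * hH.eigenvalues i) atTop atTop :=
            Tendsto.atTop_mul_const hpos' tendsto_id
          have h2 := tendsto_neg_atTop_atBot.comp h1
          exact h2.congr fun t => (neg_mul t _).symm
        simpa using (hexp.mul_const ((star U *ᵥ w) i)).const_mul (U j i)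
    simpa using h0
  have hfun : (fun t : ℝ => NormedSpace.exp ((-t) • A) *ᵥ (y + w))
      = fun t : ℝ => y + NormedSpace.exp ((-t) • A) *ᵥ w := by
    funext t
    rw [Matrix.mulVec_add, part1 t]
  rw [hfun]
  simpa using tendsto_const_nhds.add part2


/-- If `a₁₂, a₂₃ ≥ 0`, `a₁₂ + a₂₃ > 0` and
`a₁₃ > −a₁₂a₂₃/(a₁₂+a₂₃)`, then for the 3×3 graph Laplacian `Δ_W` and any `u⃗₀ ∈ ℝ³`,
`exp(−Δ_W t) u⃗₀ → b(0)·𝟙` as `t → ∞`, where `b(0) = (1/3) 𝟙ᵀ u⃗₀`. -/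
theorem stmt14 (a12 a13 a23 : ℝ) (h12 : 0 ≤ a12) (h23 : 0 ≤ a23)
    (hpos : 0 < a12 + a23) (h13 : -(a12 * a23) / (a12 + a23) < a13)
    (ΔW : Matrix (Fin 3) (Fin 3) ℝ)
    (hΔW : ΔW = !![a12 + a13, -a12, -a13;
                   -a12, a23 + a12, -a23;
                   -a13, -a23, a13 + a23])
    (u0 : Fin 3 → ℝ) :
    Tendsto (fun t : ℝ => NormedSpace.exp ((-t) • ΔW) *ᵥ u0) atTop
      (nhds (fun _ => (1 / 3 : ℝ) * ((fun _ => (1 : ℝ)) ⬝ᵥ u0))) := by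
  have hq : 0 < a13 * (a12 + a23) + a12 * a23 := by
    nlinarith [(div_lt_iff₀ hpos).mp h13]
  have hH : ΔW.IsHermitian := by
    show ΔWᴴ = ΔW
    rw [hΔW]
    ext i j
    fin_cases i <;> fin_cases j <;> simp [Matrix.conjTranspose_apply]
  have hpsd : ΔW.PosSemidef := by
    refine Matrix.posSemidef_iff_dotProduct_mulVec.mpr ⟨hH, fun x => ?_⟩
    have : star x = x := by ext i; simp
    rw [this, hΔW]
    simp [Matrix.mulVec, dotProduct, Fin.sum_univ_three]
    nlinarith [sq_nonneg (a12 * (x 0 - x 1) - a23 * (x 1 - x 2)),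
      mul_nonneg hq.le (sq_nonneg (x 0 - x 2)), hpos,
      mul_pos hpos hpos]
  have hones : ΔW *ᵥ (fun _ => (1 : ℝ)) = 0 := by
    rw [hΔW]
    ext i
    fin_cases i <;> simp [Matrix.mulVec, dotProduct, Fin.sum_univ_three, Matrix.vecHead, Matrix.vecTail] <;> ring
  have hker : ∀ x : Fin 3 → ℝ, ΔW *ᵥ x = 0 → ∀ i, x i = x 0 := by
    intro x hx i
    rw [hΔW] at hx
    have r0 := congrFun hx 0
    have r1 := congrFun hx 1
    simp [Matrix.mulVec, dotProduct, Fin.sum_univ_three, Matrix.vecHead, Matrix.vecTail] at r0 r1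
    have h2 : x 2 = x 0 := by
      have e : (a13 * (a12 + a23) + a12 * a23) * (x 0 - x 2) = 0 := by
        linear_combination (a12 + a23) * r0 + a12 * r1
      rcases mul_eq_zero.mp e with h | h
      · exact absurd h hq.ne'
      · linarith
    have h1 : x 1 = x 0 := by
      have e : (a12 + a23) * (x 1 - x 0) = 0 := by
        linear_combination r1 + a23 * h2
      rcases mul_eq_zero.mp e with h | h
      · exact absurd h hpos.ne'
      · linarith
    fin_cases i <;> simp [h1, h2]
  set b : ℝ := (1 / 3 : ℝ) * ((fun _ => (1 : ℝ)) ⬝ᵥ u0) with hb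
  have hy : ΔW *ᵥ (fun _ : Fin 3 => b) = 0 := by
    have h : (fun _ : Fin 3 => b) = b • (fun _ : Fin 3 => (1 : ℝ)) := by
      funext i; simp
    rw [h, Matrix.mulVec_smul, hones, smul_zero]
  have hw : ∀ x : Fin 3 → ℝ, ΔW *ᵥ x = 0 → x ⬝ᵥ (u0 - fun _ => b) = 0 := by
    intro x hx
    have hc := hker x hx
    have hb3 : b = (u0 0 + u0 1 + u0 2) / 3 := by
      rw [hb]; simp [dotProduct, Fin.sum_univ_three]; ring
    simp [dotProduct, Fin.sum_univ_three, hc 1, hc 2, hb3]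
    ring
  have haux := aux_tendsto ΔW hpsd (fun _ => b) (u0 - fun _ => b) hy hw
  have hsum : ((fun _ : Fin 3 => b) + (u0 - fun _ => b)) = u0 := by
    funext i; simp
  rw [hsum] at haux
  exact haux
end
end

section
/- Let a₁₂, a₂₃ ≥ 0 with a₁₂ + a₂₃ > 0 and a₁₃ < −a₁₂a₂₃/(a₁₂+a₂₃), let Δ_W be the corresponding 3×3 graph Laplacian with eigenvalue λ₃ = a₁₂+a₁₃+a₂₃ − Δ < 0 and eigenvector v₃ = (a₂₃−a₁₂+Δ, a₁₂−a₁₃−Δ, a₁₃−a₂₃)ᵀ, and let u⃗₀ ∈ ℝ³ with v₃ᵀu⃗₀ ≠ 0. Then 𝟙ᵀ exp(−Δ_W t) u⃗₀ = 𝟙ᵀ u⃗₀ for all t (the total barycenter stays constant), while ‖exp(−Δ_W t) u⃗₀‖ → ∞ as t → ∞ (the group barycenters diverge). -/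
open Matrix Filter

noncomputable section

attribute [local instance] Matrix.linftyOpNormedAddCommGroup Matrix.linftyOpNormedRing
  Matrix.linftyOpNormedAlgebra

lemma eig_exp_aux (A : Matrix (Fin 3) (Fin 3) ℝ) (v u : Fin 3 → ℝ) (μ : ℝ)
    (h : v ᵥ* A = μ • v) :
    v ⬝ᵥ (NormedSpace.exp A *ᵥ u) = Real.exp μ * (v ⬝ᵥ u) := by
  have hn : ∀ n : ℕ, v ᵥ* (A ^ n) = (μ ^ n) • v := by
    intro n
    induction n with
    | zero => simp
    | succ n ih =>
      rw [pow_succ, ← Matrix.vecMul_vecMul, ih]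
      rw [Matrix.smul_vecMul, h, smul_smul, pow_succ]
  let L : Matrix (Fin 3) (Fin 3) ℝ →ₗ[ℝ] ℝ :=
    { toFun := fun M => v ⬝ᵥ (M *ᵥ u)
      map_add' := fun M N => by simp [Matrix.add_mulVec, dotProduct_add]
      map_smul' := fun c M => by simp [Matrix.smul_mulVec] }
  have hL : Continuous L := LinearMap.continuous_of_finiteDimensional L
  have hsum : Summable fun n : ℕ => (n.factorial⁻¹ : ℝ) • A ^ n :=
    NormedSpace.expSeries_summable' A
  have h1 : v ⬝ᵥ (NormedSpace.exp A *ᵥ u)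
      = ∑' n : ℕ, L ((n.factorial⁻¹ : ℝ) • A ^ n) := by
    rw [NormedSpace.exp_eq_tsum (𝕂 := ℝ)]
    exact (hsum.hasSum.map L hL).tsum_eq.symm
  rw [h1]
  have h2 : ∀ n : ℕ, L ((n.factorial⁻¹ : ℝ) • A ^ n)
      = ((n.factorial⁻¹ : ℝ) * μ ^ n) * (v ⬝ᵥ u) := by
    intro n
    simp only [L, LinearMap.coe_mk, AddHom.coe_mk, _root_.map_smul, smul_eq_mul]
    rw [Matrix.dotProduct_mulVec, hn, smul_dotProduct, smul_eq_mul]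
    ring
  simp_rw [h2]
  rw [tsum_mul_right]
  congr 1
  rw [Real.exp_eq_exp_ℝ, NormedSpace.exp_eq_tsum (𝕂 := ℝ)]
  simp [smul_eq_mul]

lemma vecMul_smul_mat (c : ℝ) (M : Matrix (Fin 3) (Fin 3) ℝ) (v : Fin 3 → ℝ) :
    v ᵥ* (c • M) = c • (v ᵥ* M) := by
  ext j
  simp [Matrix.vecMul, dotProduct, Fin.sum_univ_three]
  ring

/-- If `a₁₂, a₂₃ ≥ 0`, `a₁₂ + a₂₃ > 0`, `a₁₃ < −a₁₂a₂₃/(a₁₂+a₂₃)`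
(so that `λ₃ = a₁₂+a₁₃+a₂₃ − Δ < 0`), and `u⃗₀ ∈ ℝ³` has `v₃ᵀu⃗₀ ≠ 0`, then the total
barycenter `𝟙ᵀ exp(−Δ_W t) u⃗₀` is constant in `t`, while `‖exp(−Δ_W t) u⃗₀‖ → ∞` as
`t → ∞`. -/
theorem stmt16 (a12 a13 a23 : ℝ) (h12 : 0 ≤ a12) (h23 : 0 ≤ a23)
    (hpos : 0 < a12 + a23) (h13 : a13 < -(a12 * a23) / (a12 + a23))
    (ΔW : Matrix (Fin 3) (Fin 3) ℝ)
    (hΔW : ΔW = !![a12 + a13, -a12, -a13;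
                   -a12, a23 + a12, -a23;
                   -a13, -a23, a13 + a23])
    (Δ : ℝ)
    (hΔ : Δ = Real.sqrt ((a12 - a13) ^ 2 + (a12 - a23) ^ 2 + (a13 - a23) ^ 2) /
      Real.sqrt 2)
    (hlam3 : a12 + a13 + a23 - Δ < 0)
    (v₃ : Fin 3 → ℝ)
    (hv₃ : v₃ = ![a23 - a12 + Δ, a12 - a13 - Δ, a13 - a23])
    (u0 : Fin 3 → ℝ) (hu0 : v₃ ⬝ᵥ u0 ≠ 0) :
    (∀ t : ℝ, (fun _ => (1 : ℝ)) ⬝ᵥ (NormedSpace.exp ((-t) • ΔW) *ᵥ u0) =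
      (fun _ => (1 : ℝ)) ⬝ᵥ u0) ∧
    Tendsto (fun t : ℝ => ‖NormedSpace.exp ((-t) • ΔW) *ᵥ u0‖) atTop atTop := by
  have hS : (0:ℝ) ≤ (a12 - a13) ^ 2 + (a12 - a23) ^ 2 + (a13 - a23) ^ 2 := by positivity
  have hΔsq : Δ ^ 2 = ((a12 - a13) ^ 2 + (a12 - a23) ^ 2 + (a13 - a23) ^ 2) / 2 := by
    rw [hΔ, div_pow, Real.sq_sqrt hS, Real.sq_sqrt (by norm_num : (0:ℝ) ≤ 2)]
  -- ones is a left eigenvector with eigenvalue 0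
  have hones : (fun _ => (1 : ℝ)) ᵥ* ΔW = (0 : ℝ) • (fun _ => (1 : ℝ)) := by
    subst hΔW
    funext j
    fin_cases j <;>
      simp [Matrix.vecMul, dotProduct, Fin.sum_univ_three] <;> ring
  -- v₃ is a left eigenvector with eigenvalue λ₃
  set lam : ℝ := a12 + a13 + a23 - Δ with hlam
  have hv3A : v₃ ᵥ* ΔW = lam • v₃ := by
    subst hΔW; subst hv₃
    funext j
    fin_cases j
    · simp [Matrix.vecMul, dotProduct, Fin.sum_univ_three, hlam]
      linear_combination hΔsq
    · simp [Matrix.vecMul, dotProduct, Fin.sum_univ_three, hlam]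
      linear_combination -hΔsq
    · simp [Matrix.vecMul, dotProduct, Fin.sum_univ_three, hlam]
      ring
  constructor
  · intro t
    have h0 : (fun _ => (1 : ℝ)) ᵥ* ((-t) • ΔW) = (0 : ℝ) • (fun _ => (1 : ℝ)) := by
      rw [vecMul_smul_mat, hones]
      simp
    have := eig_exp_aux ((-t) • ΔW) (fun _ => (1 : ℝ)) u0 0 h0
    simpa using this
  · -- divergence
    have hdot : ∀ t : ℝ, v₃ ⬝ᵥ (NormedSpace.exp ((-t) • ΔW) *ᵥ u0) =
        Real.exp ((-t) * lam) * (v₃ ⬝ᵥ u0) := by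
      intro t
      refine eig_exp_aux _ _ _ _ ?_
      rw [vecMul_smul_mat, hv3A, smul_smul]
    set c : ℝ := ∑ i, |v₃ i| with hc
    have hv3ne : ∃ i, v₃ i ≠ 0 := by
      by_contra h
      push_neg at h
      exact hu0 (by simp [funext h, zero_dotProduct])
    have hcpos : 0 < c := by
      obtain ⟨i, hi⟩ := hv3ne
      rw [hc]
      exact lt_of_lt_of_le (abs_pos.2 hi)
        (Finset.single_le_sum (f := fun j => |v₃ j|) (fun j _ => abs_nonneg _)
          (Finset.mem_univ i))
    have hb : ∀ x : Fin 3 → ℝ, |v₃ ⬝ᵥ x| ≤ c * ‖x‖ := by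
      intro x
      calc |∑ i, v₃ i * x i| ≤ ∑ i, |v₃ i * x i| := Finset.abs_sum_le_sum_abs _ _
        _ ≤ ∑ i, |v₃ i| * ‖x‖ := by
            refine Finset.sum_le_sum fun i _ => ?_
            rw [abs_mul]
            exact mul_le_mul_of_nonneg_left
              ((Real.norm_eq_abs (x i)) ▸ norm_le_pi_norm x i) (abs_nonneg _)
        _ = c * ‖x‖ := by rw [hc, Finset.sum_mul]
    have hlow : ∀ t : ℝ, Real.exp (t * (-lam)) * (|v₃ ⬝ᵥ u0| / c) ≤
        ‖NormedSpace.exp ((-t) • ΔW) *ᵥ u0‖ := by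
      intro t
      have h1 := hb (NormedSpace.exp ((-t) • ΔW) *ᵥ u0)
      rw [hdot t, abs_mul, Real.abs_exp] at h1
      have h2 : Real.exp ((-t) * lam) * |v₃ ⬝ᵥ u0| / c ≤
          ‖NormedSpace.exp ((-t) • ΔW) *ᵥ u0‖ := by
        rw [div_le_iff₀ hcpos]
        linarith [h1]
      calc Real.exp (t * (-lam)) * (|v₃ ⬝ᵥ u0| / c)
          = Real.exp ((-t) * lam) * |v₃ ⬝ᵥ u0| / c := by
            rw [show t * (-lam) = (-t) * lam by ring]; ring
        _ ≤ _ := h2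
    have hgrow : Tendsto (fun t : ℝ => Real.exp (t * (-lam)) * (|v₃ ⬝ᵥ u0| / c))
        atTop atTop := by
      refine Tendsto.atTop_mul_const (div_pos (abs_pos.2 hu0) hcpos) ?_
      exact Real.tendsto_exp_atTop.comp (tendsto_id.atTop_mul_const (by linarith))
    exact tendsto_atTop_mono hlow hgrow
end
end

section
/- Let ι = (0 = i₀ < ⋯ < i_N = 1) be a partition of [0,1], W a step graphon on ι with matrix W_ι, and fix j. Let u₀ ∈ L²([0,1]) decompose as u₀ = p₀ + Σ_k w_k with p₀ = 1_ιᵀ u⃗₀ ∈ 𝒫_ι and w_k ∈ L²₀((i_{k-1}, i_k]), and let u(x,t) = 1_ι(x)ᵀ exp(−Δ_{W_ι} t) u⃗₀ + Σ_k w_k(x) exp(−μ_k t) with μ_k = (W_ι 𝟙)_k be the solution of the graphon Cauchy problem with initial condition u₀. Then for x ∈ (i_{j-1}, i_j], u(x,t) − u_j(t) = (u₀(x) − u_{0j}) exp(−μ_j t), where u_j(t) = (exp(−Δ_{W_ι} t) u⃗₀)_j and u_{0j} = (u⃗₀)_j. Consequently, if μ_j > 0 then sup_{x ∈ (i_{j-1},i_j]}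 deviations |u(x,t) − u_j(t)| decay to 0 in L² as t → ∞ (the group collapses to its barycenter); if μ_j = 0 the deviation profile is constant in t; and if μ_j < 0 and w_j ≠ 0 the L² norm of the deviation grows exponentially. -/
open MeasureTheory Matrix Filter

noncomputable section

lemma not_mem_Iset {N : ℕ} {i : Fin (N + 1) → ℝ} (hmono : StrictMono i)
    {j k : Fin N} (hne : k ≠ j) {x : ℝ} (hx : x ∈ Iset i j) : x ∉ Iset i k := by
  intro hxk
  rcases lt_or_gt_of_ne hne with h | h
  · have h1 : i k.succ ≤ i j.castSucc := by
      apply hmono.monotone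
      have hv : (k : ℕ) < (j : ℕ) := h
      rw [Fin.le_def, Fin.val_succ, Fin.coe_castSucc]
      omega
    have := hx.1
    have := hxk.2
    linarith
  · have h1 : i j.succ ≤ i k.castSucc := by
      apply hmono.monotone
      have hv : (j : ℕ) < (k : ℕ) := h
      rw [Fin.le_def, Fin.val_succ, Fin.coe_castSucc]
      omega
    have := hx.2
    have := hxk.1
    linarith

lemma oneι_dot {N : ℕ} {i : Fin (N + 1) → ℝ} (hmono : StrictMono i)
    {j : Fin N} {x : ℝ} (hx : x ∈ Iset i j) (v : Fin N → ℝ) :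
    oneι i x ⬝ᵥ v = v j := by
  unfold dotProduct oneι
  rw [Finset.sum_eq_single j]
  · simp [Set.indicator_of_mem hx]
  · intro k _ hk
    simp [Set.indicator_of_notMem (not_mem_Iset hmono hk hx)]
  · simp

/-- Let `u₀ = p₀ + Σ_k w_k` with `p₀ = 1_ιᵀ u⃗₀ ∈ 𝒫_ι` and
`w_k ∈ L²₀((i_{k-1}, i_k])`, and let
`u(x,t) = 1_ι(x)ᵀ exp(−Δ_{W_ι} t) u⃗₀ + Σ_k w_k(x) exp(−μ_k t)`, `μ_k = (W_ι 𝟙)_k`, be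
the solution of the graphon Cauchy problem with initial condition `u₀`. Then for
`x ∈ (i_{j-1}, i_j]`, `u(x,t) − u_j(t) = (u₀(x) − u_{0j}) exp(−μ_j t)` where
`u_j(t) = (exp(−Δ_{W_ι} t) u⃗₀)_j`; consequently, if `μ_j > 0` the `L²` norm of the
deviation inside group `j` decays to `0` as `t → ∞`; if `μ_j = 0` the deviation profile
is constant in `t`; and if `μ_j < 0` and `w_j ≠ 0` the `L²` norm of the deviation grows
to infinity. -/
theorem stmt17 (N : ℕ) (hN : 0 < N) (i : Fin (N + 1) → ℝ) (hmono : StrictMono i)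
    (h0 : i 0 = 0) (h1 : i (Fin.last N) = 1) (b : Matrix (Fin N) (Fin N) ℝ)
    (j : Fin N) (u0vec : Fin N → ℝ) (w : Fin N → ℝ → ℝ)
    (hw : ∀ k, w k ∈ L20F (Iset i k))
    (μ : Fin N → ℝ) (hμ : μ = Wmat i b *ᵥ fun _ => (1 : ℝ))
    (u₀ : ℝ → ℝ) (hu₀ : u₀ = fun x => oneι i x ⬝ᵥ u0vec + ∑ k : Fin N, w k x)
    (u : ℝ → ℝ → ℝ)
    (hu : u = fun x t => oneι i x ⬝ᵥ (NormedSpace.exp ((-t) • lap (Wmat i b)) *ᵥ u0vec) +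
      ∑ k : Fin N, w k x * Real.exp (-(μ k) * t))
    (uj : ℝ → ℝ)
    (huj : uj = fun t => (NormedSpace.exp ((-t) • lap (Wmat i b)) *ᵥ u0vec) j) :
    (∀ t : ℝ, ∀ x ∈ Iset i j,
      u x t - uj t = (u₀ x - u0vec j) * Real.exp (-(μ j) * t)) ∧
    (0 < μ j →
      Tendsto (fun t : ℝ => ∫ x in Iset i j, (u x t - uj t) ^ 2) atTop (nhds 0)) ∧
    (μ j = 0 → ∀ t : ℝ, ∀ x ∈ Iset i j, u x t - uj t = u₀ x - u0vec j) ∧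
    (μ j < 0 → 0 < ∫ x in Iset i j, w j x ^ 2 →
      Tendsto (fun t : ℝ => ∫ x in Iset i j, (u x t - uj t) ^ 2) atTop atTop) := by

  have hmemsub : MeasurableSet (Iset i j) := measurableSet_Ioc
  have hwz : ∀ k ≠ j, ∀ x ∈ Iset i j, w k x = 0 := fun k hk x hx =>
    (hw k).2.1 x (not_mem_Iset hmono hk hx)
  have hkey : ∀ t : ℝ, ∀ x ∈ Iset i j,
      u x t - uj t = w j x * Real.exp (-(μ j) * t) := by
    intro t x hx
    subst hu huj
    simp only
    rw [oneι_dot hmono hx, Finset.sum_eq_single j]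
    · ring
    · intro k _ hk
      rw [hwz k hk x hx]; ring
    · simp
  have hkey0 : ∀ x ∈ Iset i j, u₀ x - u0vec j = w j x := by
    intro x hx
    subst hu₀
    simp only
    rw [oneι_dot hmono hx, Finset.sum_eq_single j]
    · ring
    · intro k _ hk
      exact hwz k hk x hx
    · simp
  have hint : ∀ t : ℝ, ∫ x in Iset i j, (u x t - uj t) ^ 2
      = (∫ x in Iset i j, w j x ^ 2) * Real.exp (-(μ j) * t) ^ 2 := by
    intro t
    rw [← MeasureTheory.integral_mul_const]
    apply MeasureTheory.setIntegral_congr_fun hmemsub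
    intro x hx
    dsimp only
    rw [hkey t x hx]
    ring
  refine ⟨?_, ?_, ?_, ?_⟩
  · intro t x hx
    rw [hkey t x hx, hkey0 x hx]
  · intro hμj
    simp only [hint]
    have he : Tendsto (fun t : ℝ => Real.exp (-(μ j) * t)) atTop (nhds 0) := by
      apply Real.tendsto_exp_atBot.comp
      exact Tendsto.const_mul_atTop_of_neg (by linarith) tendsto_id
    have := ((he.pow 2).const_mul (∫ x in Iset i j, w j x ^ 2))
    simpa using this
  · intro hμj t x hx
    rw [hkey t x hx, hkey0 x hx, hμj]
    simp
  · intro hμj hC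
    simp only [hint]
    have he : Tendsto (fun t : ℝ => Real.exp (-(μ j) * t)) atTop atTop := by
      apply Real.tendsto_exp_atTop.comp
      exact Tendsto.const_mul_atTop (by linarith) tendsto_id
    have hp : Tendsto (fun t : ℝ => Real.exp (-(μ j) * t) ^ 2) atTop atTop := by
      simpa [pow_two] using he.atTop_mul_atTop₀ he
    exact Tendsto.const_mul_atTop hC hp
end
end
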